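/- Let G be a simple signed graph whose unique positive edge is ab, with every vertex of G in N(a) ∪ N(b). Let G' be obtained from G by making ab negative. Then fix(G) ≤ fix(G') + 1, and if G has no induced 4-cycle containing the edge ab, then fix(G) ≤ fix(G'). -/

import Mathlib

/-- `S` is a fixed set of the conjunctive network with positive edges `pos`,
negative edges `neg`. -/
def IsFixedSet {V : Type*} (pos neg : V → V → Prop) (S : Set V) : Prop :=
  ∀ v, v ∈ S ↔ (∀ u, pos u v → u ∈ S) ∧ (∀ u, neg u v → u ∉ S)

/-- Number of fixed points of the conjunctive network. -/
noncomputable def fixc {V : Type*} (pos neg : V → V → Prop) : ℕ :=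
  Set.ncard {S : Set V | IsFixedSet pos neg S}

/-- `{a,b,u,v}` induces a 4-cycle `a-b-u-v-a` in the graph with adjacency `adj`. -/
def IsInducedC4 {V : Type*} (adj : V → V → Prop) (a b u v : V) : Prop :=
  a ≠ b ∧ a ≠ u ∧ a ≠ v ∧ b ≠ u ∧ b ≠ v ∧ u ≠ v ∧
  adj a b ∧ adj b u ∧ adj u v ∧ adj v a ∧ ¬ adj a u ∧ ¬ adj b v

section Aux

open Classical

variable {V : Type*} (neg : V → V → Prop) (a b : V)

/-- The positive edge `ab` (in both directions). -/
abbrev posE : V → V → Prop := fun u w => (u = a ∧ w = b) ∨ (u = b ∧ w = a)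

/-- The negative edges after making `ab` negative. -/
abbrev negE : V → V → Prop := fun u w => neg u w ∨ (u = a ∧ w = b) ∨ (u = b ∧ w = a)

/-- Fixed sets of an all-negative network are independent dominating sets. -/
lemma fixedNeg_iff (ng : V → V → Prop) (S : Set V) :
    IsFixedSet (fun _ _ => False) ng S ↔
      ((∀ v ∈ S, ∀ u ∈ S, ¬ ng u v) ∧ ∀ v, v ∉ S → ∃ u ∈ S, ng u v) := by
  constructor
  · intro h
    constructor
    · intro v hv u hu hng
      exact ((h v).mp hv).2 u hng hu
    · intro v hv
      by_contra hc
      push_neg at hc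
      exact hv ((h v).mpr ⟨fun u hf => hf.elim, fun u hng hu => hc u hu hng⟩)
  · rintro ⟨h1, h2⟩ v
    constructor
    · intro hv
      exact ⟨fun u hf => hf.elim, fun u hng hu => h1 v hv u hu hng⟩
    · rintro ⟨-, h⟩
      by_contra hv
      obtain ⟨u, hu, hng⟩ := h2 v hv
      exact h u hng hu

/-- Fixed sets of `G` that avoid both `a` and `b`. -/
def Bset : Set (Set V) :=
  {S | IsFixedSet (posE a b) neg S ∧ a ∉ S ∧ b ∉ S}

lemma mem_Bset_iff {S : Set V} :
    S ∈ Bset neg a b ↔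
      (a ∉ S ∧ b ∉ S ∧ (∀ v ∈ S, ∀ u ∈ S, ¬ neg u v) ∧
        ∀ v, v ∉ S → v ≠ a → v ≠ b → ∃ u ∈ S, neg u v) := by
  constructor
  · rintro ⟨hfix, ha, hb⟩
    refine ⟨ha, hb, fun v hv u hu h => ((hfix v).mp hv).2 u h hu, ?_⟩
    intro v hv hva hvb
    by_contra hcon
    push_neg at hcon
    refine hv ((hfix v).mpr ⟨?_, fun u h hu => hcon u hu h⟩)
    rintro u (⟨rfl, rfl⟩ | ⟨rfl, rfl⟩)
    · exact absurd rfl hvb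
    · exact absurd rfl hva
  · rintro ⟨ha, hb, hind, hdom⟩
    refine ⟨?_, ha, hb⟩
    intro v
    constructor
    · intro hv
      refine ⟨?_, fun u h hu => hind v hv u hu h⟩
      rintro u (⟨rfl, rfl⟩ | ⟨rfl, rfl⟩)
      · exact absurd hv hb
      · exact absurd hv ha
    · rintro ⟨hpos, hneg⟩
      by_contra hv
      by_cases hva : v = a
      · subst hva
        exact hb (hpos b (Or.inr ⟨rfl, rfl⟩))
      by_cases hvb : v = b
      · subst hvb
        exact ha (hpos a (Or.inl ⟨rfl, rfl⟩))
      obtain ⟨u, hu, h⟩ := hdom v hv hva hvb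
      exact hneg u h hu

/-- A fixed set of `G` containing `a` or `b` is exactly `{a, b}`. -/
lemma fixedG_eq_pair (hcover : ∀ v : V, (v = b ∨ neg v a) ∨ (v = a ∨ neg v b))
    {S : Set V} (hfix : IsFixedSet (posE a b) neg S) (hS : a ∈ S ∨ b ∈ S) :
    S = {a, b} := by
  have haS : a ∈ S := by
    rcases hS with h | h
    · exact h
    · exact ((hfix b).mp h).1 a (Or.inl ⟨rfl, rfl⟩)
  have hbS : b ∈ S := ((hfix a).mp haS).1 b (Or.inr ⟨rfl, rfl⟩)
  have hna := ((hfix a).mp haS).2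
  have hnb := ((hfix b).mp hbS).2
  ext x
  simp only [Set.mem_insert_iff, Set.mem_singleton_iff]
  constructor
  · intro hx
    rcases hcover x with (h | h) | (h | h)
    · exact Or.inr h
    · exact absurd hx (hna x h)
    · exact Or.inl h
    · exact absurd hx (hnb x h)
  · rintro (rfl | rfl)
    · exact haS
    · exact hbS

/-- The injection from `Bset` into fixed sets of `G'`. -/
noncomputable def phi (S : Set V) : Set V :=
  if (∃ u ∈ S, neg u a) then (if (∃ u ∈ S, neg u b) then S else insert b S)
  else insert a S

lemma phi_mem (hab : a ≠ b) (hns : Symmetric neg) (hni : ∀ v, ¬ neg v v)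
    {S : Set V} (hS : S ∈ Bset neg a b) :
    IsFixedSet (fun _ _ => False) (negE neg a b) (phi neg a b S) := by
  obtain ⟨haS, hbS, hSind, hSdom⟩ := (mem_Bset_iff neg a b).mp hS
  rw [fixedNeg_iff]
  unfold phi
  by_cases hda : ∃ u ∈ S, neg u a
  · by_cases hdb : ∃ u ∈ S, neg u b
    · rw [if_pos hda, if_pos hdb]
      constructor
      · intro w hw u hu hng
        rcases hng with h | ⟨-, h⟩ | ⟨-, h⟩
        · exact hSind w hw u hu h
        · exact hbS (h ▸ hw)
        · exact haS (h ▸ hw)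
      · intro w hw
        by_cases hwa : w = a
        · subst hwa
          obtain ⟨u, huS, hu⟩ := hda
          exact ⟨u, huS, Or.inl hu⟩
        by_cases hwb : w = b
        · subst hwb
          obtain ⟨u, huS, hu⟩ := hdb
          exact ⟨u, huS, Or.inl hu⟩
        obtain ⟨u, huS, hu⟩ := hSdom w hw hwa hwb
        exact ⟨u, huS, Or.inl hu⟩
    · rw [if_pos hda, if_neg hdb]
      constructor
      · intro w hw u hu hng
        rcases Set.mem_insert_iff.mp hw with hw1 | hwS
        · rcases Set.mem_insert_iff.mp hu with hu1 | huS
          · rcases hng with h | ⟨h, -⟩ | ⟨-, h⟩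
            · rw [hw1, hu1] at h; exact hni b h
            · exact hab (h.symm.trans hu1)
            · exact hab (h.symm.trans hw1)
          · rcases hng with h | ⟨h, -⟩ | ⟨-, h⟩
            · rw [hw1] at h; exact hdb ⟨u, huS, h⟩
            · rw [h] at huS; exact haS huS
            · exact hab (h.symm.trans hw1)
        · rcases Set.mem_insert_iff.mp hu with hu1 | huS
          · rcases hng with h | ⟨h, -⟩ | ⟨-, h⟩
            · rw [hu1] at h; exact hdb ⟨w, hwS, hns h⟩
            · exact hab (h.symm.trans hu1)
            · rw [h] at hwS; exact haS hwS
          · rcases hng with h | ⟨-, h⟩ | ⟨-, h⟩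
            · exact hSind w hwS u huS h
            · rw [h] at hwS; exact hbS hwS
            · rw [h] at hwS; exact haS hwS
      · intro w hw
        have hwb : w ≠ b := fun h => hw (h ▸ Set.mem_insert b S)
        have hwS : w ∉ S := fun h => hw (Set.mem_insert_of_mem b h)
        by_cases hwa : w = a
        · subst hwa
          exact ⟨b, Set.mem_insert b S, Or.inr (Or.inr ⟨rfl, rfl⟩)⟩
        obtain ⟨u, huS, hu⟩ := hSdom w hwS hwa hwb
        exact ⟨u, Set.mem_insert_of_mem b huS, Or.inl hu⟩
  · rw [if_neg hda]
    constructor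
    · intro w hw u hu hng
      rcases Set.mem_insert_iff.mp hw with hw1 | hwS
      · rcases Set.mem_insert_iff.mp hu with hu1 | huS
        · rcases hng with h | ⟨-, h⟩ | ⟨h, -⟩
          · rw [hw1, hu1] at h; exact hni a h
          · exact hab (hw1.symm.trans h)
          · exact hab (hu1.symm.trans h)
        · rcases hng with h | ⟨-, h⟩ | ⟨h, -⟩
          · rw [hw1] at h; exact hda ⟨u, huS, h⟩
          · exact hab (hw1.symm.trans h)
          · rw [h] at huS; exact hbS huS
      · rcases Set.mem_insert_iff.mp hu with hu1 | huS
        · rcases hng with h | ⟨-, h⟩ | ⟨h, -⟩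
          · rw [hu1] at h; exact hda ⟨w, hwS, hns h⟩
          · rw [h] at hwS; exact hbS hwS
          · exact hab (hu1.symm.trans h)
        · rcases hng with h | ⟨-, h⟩ | ⟨-, h⟩
          · exact hSind w hwS u huS h
          · rw [h] at hwS; exact hbS hwS
          · rw [h] at hwS; exact haS hwS
    · intro w hw
      have hwa : w ≠ a := fun h => hw (h ▸ Set.mem_insert a S)
      have hwS : w ∉ S := fun h => hw (Set.mem_insert_of_mem a h)
      by_cases hwb : w = b
      · subst hwb
        exact ⟨a, Set.mem_insert a S, Or.inr (Or.inl ⟨rfl, rfl⟩)⟩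
      obtain ⟨u, huS, hu⟩ := hSdom w hwS hwa hwb
      exact ⟨u, Set.mem_insert_of_mem a huS, Or.inl hu⟩

lemma phi_spec {S : Set V} (hS : S ∈ Bset neg a b) (v : V) :
    v ∈ S ↔ (v ∈ phi neg a b S ∧ v ≠ a ∧ v ≠ b) := by
  obtain ⟨haS, hbS, -, -⟩ := (mem_Bset_iff neg a b).mp hS
  unfold phi
  constructor
  · intro hv
    refine ⟨?_, fun h => haS (h ▸ hv), fun h => hbS (h ▸ hv)⟩
    split_ifs
    · exact hv
    · exact Set.mem_insert_of_mem b hv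
    · exact Set.mem_insert_of_mem a hv
  · rintro ⟨hv, hva, hvb⟩
    split_ifs at hv
    · exact hv
    · rcases Set.mem_insert_iff.mp hv with h | h
      · exact absurd h hvb
      · exact h
    · rcases Set.mem_insert_iff.mp hv with h | h
      · exact absurd h hva
      · exact h

lemma phi_injOn : Set.InjOn (phi neg a b) (Bset neg a b) := by
  intro S hS S' hS' h
  ext x
  rw [phi_spec neg a b hS x, phi_spec neg a b hS' x, h]

/-- Case where some vertex sees `a` but not `b`: use a maximal independent set
avoiding the neighbourhoods of `a` and `v`, together with `a`. -/
lemma case1_exists [Fintype V] (hab : a ≠ b) (hns : Symmetric neg)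
    (hni : ∀ v, ¬ neg v v) (hnab : ¬ neg a b)
    (hcover : ∀ v : V, (v = b ∨ neg v a) ∨ (v = a ∨ neg v b))
    (hC4 : ¬ ∃ u v, IsInducedC4
        (fun x y => ((x = a ∧ y = b) ∨ (x = b ∧ y = a)) ∨ neg x y) a b u v)
    (v : V) (hva : neg v a) (hvb : ¬ neg v b) :
    ∃ T : Set V, IsFixedSet (fun _ _ => False) (negE neg a b) T ∧
      T ∉ (phi neg a b) '' (Bset neg a b) := by
  have hvna : v ≠ a := fun h => hni a (h ▸ hva)
  have hvnb : v ≠ b := fun h => hnab (hns (h ▸ hva))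
  set R : Set V := {w | w ≠ a ∧ w ≠ b ∧ ¬ neg w a ∧ ¬ neg w v} with hR
  set F : Set (Set V) := {M | M ⊆ R ∧ ∀ x ∈ M, ∀ y ∈ M, ¬ neg x y} with hF
  have hFne : F.Nonempty :=
    ⟨∅, Set.empty_subset _, fun x hx => absurd hx (Set.notMem_empty x)⟩
  obtain ⟨M, hMF, hMmax⟩ := Set.Finite.exists_maximalFor id F (Set.toFinite F) hFne
  obtain ⟨hMR, hMind⟩ := hMF
  refine ⟨insert a M, ?_, ?_⟩
  · rw [fixedNeg_iff]
    constructor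
    · intro w hw u hu hng
      rcases Set.mem_insert_iff.mp hw with hw1 | hwM
      · rcases Set.mem_insert_iff.mp hu with hu1 | huM
        · rcases hng with h | ⟨-, h⟩ | ⟨h, -⟩
          · rw [hw1, hu1] at h; exact hni a h
          · exact hab (hw1.symm.trans h)
          · exact hab (hu1.symm.trans h)
        · rcases hng with h | ⟨-, h⟩ | ⟨h, -⟩
          · rw [hw1] at h; exact (hMR huM).2.2.1 h
          · exact hab (hw1.symm.trans h)
          · exact (hMR huM).2.1 h
      · rcases Set.mem_insert_iff.mp hu with hu1 | huM
        · rcases hng with h | ⟨-, h⟩ | ⟨h, -⟩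
          · rw [hu1] at h; exact (hMR hwM).2.2.1 (hns h)
          · exact (hMR hwM).2.1 h
          · exact hab (hu1.symm.trans h)
        · rcases hng with h | ⟨-, h⟩ | ⟨-, h⟩
          · exact hMind u huM w hwM h
          · exact (hMR hwM).2.1 h
          · exact (hMR hwM).1 h
    · intro w hw
      have hwa : w ≠ a := fun h => hw (h ▸ Set.mem_insert a M)
      have hwM : w ∉ M := fun h => hw (Set.mem_insert_of_mem a h)
      by_cases hwb : w = b
      · subst hwb
        exact ⟨a, Set.mem_insert a M, Or.inr (Or.inl ⟨rfl, rfl⟩)⟩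
      by_cases hwna : neg w a
      · exact ⟨a, Set.mem_insert a M, Or.inl (hns hwna)⟩
      have hwnb : neg w b := by
        rcases hcover w with (h | h) | (h | h)
        · exact absurd h hwb
        · exact absurd h hwna
        · exact absurd h hwa
        · exact h
      by_cases hwv : neg w v
      · exfalso
        refine hC4 ⟨w, v, hab, Ne.symm hwa, Ne.symm hvna, Ne.symm hwb, Ne.symm hvnb,
          fun h => hni v (h ▸ hwv), Or.inl (Or.inl ⟨rfl, rfl⟩), Or.inr (hns hwnb),
          Or.inr hwv, Or.inr hva, ?_, ?_⟩
        · rintro ((⟨-, h⟩ | ⟨h, -⟩) | h)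
          · exact hwb h
          · exact hab h
          · exact hwna (hns h)
        · rintro ((⟨h, -⟩ | ⟨-, h⟩) | h)
          · exact hab h.symm
          · exact hvna h
          · exact hvb (hns h)
      · have hwR : w ∈ R := ⟨hwa, hwb, hwna, hwv⟩
        by_cases hm : ∃ m ∈ M, neg m w
        · obtain ⟨m, hmM, hmw⟩ := hm
          exact ⟨m, Set.mem_insert_of_mem a hmM, Or.inl hmw⟩
        · exfalso
          have hins : insert w M ∈ F := by
            refine ⟨Set.insert_subset_iff.mpr ⟨hwR, hMR⟩, ?_⟩
            intro x hx y hy h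
            rcases Set.mem_insert_iff.mp hx with hxw | hx
            · rcases Set.mem_insert_iff.mp hy with hyw | hy
              · rw [hxw, hyw] at h; exact hni w h
              · rw [hxw] at h; exact hm ⟨y, hy, hns h⟩
            · rcases Set.mem_insert_iff.mp hy with hyw | hy
              · rw [hyw] at h; exact hm ⟨x, hx, h⟩
              · exact hMind x hx y hy h
          have heq : M = insert w M :=
            (Set.subset_insert w M).antisymm (hMmax hins (Set.subset_insert w M))
          exact hwM (by rw [heq]; exact Set.mem_insert w M)
  · rintro ⟨S, hS, hphiS⟩
    obtain ⟨haS, hbS, hSind, hSdom⟩ := (mem_Bset_iff neg a b).mp hS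
    unfold phi at hphiS
    by_cases hda : ∃ u ∈ S, neg u a
    · rw [if_pos hda] at hphiS
      by_cases hdb : ∃ u ∈ S, neg u b
      · rw [if_pos hdb] at hphiS
        exact haS (by rw [hphiS]; exact Set.mem_insert a M)
      · rw [if_neg hdb] at hphiS
        have hbm : b ∈ insert a M := by rw [← hphiS]; exact Set.mem_insert b S
        rcases Set.mem_insert_iff.mp hbm with h | h
        · exact hab h.symm
        · exact (hMR h).2.1 rfl
    · rw [if_neg hda] at hphiS
      have haM : a ∉ M := fun h => (hMR h).1 rfl
      have hSM : S = M := by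
        ext x
        constructor
        · intro hx
          have hxi : x ∈ insert a M := by
            rw [← hphiS]; exact Set.mem_insert_of_mem a hx
          rcases Set.mem_insert_iff.mp hxi with rfl | h
          · exact absurd hx haS
          · exact h
        · intro hx
          have hxi : x ∈ insert a S := by
            rw [hphiS]; exact Set.mem_insert_of_mem a hx
          rcases Set.mem_insert_iff.mp hxi with rfl | h
          · exact absurd hx haM
          · exact h
      have hvS : v ∉ S := by
        rw [hSM]; exact fun h => (hMR h).2.2.1 hva
      obtain ⟨u, huS, hu⟩ := hSdom v hvS hvna hvnb
      have huM : u ∈ M := by rw [← hSM]; exact huS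
      exact (hMR huM).2.2.2 hu

/-- Case where every neighbour of `a` is a neighbour of `b`: use `{b}`. -/
lemma case2_exists (hab : a ≠ b) (hns : Symmetric neg)
    (hni : ∀ v, ¬ neg v v) (hnab : ¬ neg a b)
    (hcover : ∀ v : V, (v = b ∨ neg v a) ∨ (v = a ∨ neg v b))
    (hall : ∀ w, neg w a → neg w b) :
    IsFixedSet (fun _ _ => False) (negE neg a b) {b} ∧
      ({b} : Set V) ∉ (phi neg a b) '' (Bset neg a b) := by
  constructor
  · rw [fixedNeg_iff]
    constructor
    · intro w hw u hu hng
      rw [Set.mem_singleton_iff] at hw hu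
      rcases hng with h | ⟨h1, -⟩ | ⟨-, h2⟩
      · rw [hw, hu] at h; exact hni b h
      · rw [h1] at hu; exact hab hu
      · rw [h2] at hw; exact hab hw
    · intro w hw
      rw [Set.mem_singleton_iff] at hw
      refine ⟨b, rfl, ?_⟩
      by_cases hwa : w = a
      · exact Or.inr (Or.inr ⟨rfl, hwa⟩)
      · rcases hcover w with (h | h) | (h | h)
        · exact absurd h hw
        · exact Or.inl (hns (hall w h))
        · exact absurd h hwa
        · exact Or.inl (hns h)
  · rintro ⟨S, hS, hphiS⟩
    obtain ⟨haS, hbS, hSind, hSdom⟩ := (mem_Bset_iff neg a b).mp hS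
    unfold phi at hphiS
    by_cases hda : ∃ u ∈ S, neg u a
    · obtain ⟨u, huS, hu⟩ := id hda
      have huB : u ∈ ({b} : Set V) := by
        by_cases hdb : ∃ u ∈ S, neg u b
        · rw [if_pos hda, if_pos hdb] at hphiS
          rw [← hphiS]; exact huS
        · rw [if_pos hda, if_neg hdb] at hphiS
          rw [← hphiS]; exact Set.mem_insert_of_mem b huS
      rw [Set.mem_singleton_iff] at huB
      rw [huB] at hu
      exact hnab (hns hu)
    · rw [if_neg hda] at hphiS
      have : a ∈ ({b} : Set V) := by rw [← hphiS]; exact Set.mem_insert a S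
      exact hab (Set.mem_singleton_iff.mp this)

end Aux

/-- Let `G` be a simple signed graph whose unique positive edge is `ab` and whose
vertex set is `N(a) ∪ N(b)`. Making `ab` negative decreases the number of fixed points
by at most one, and does not decrease it at all if `G` has no induced 4-cycle
containing the edge `ab`. -/
theorem stmt10 {V : Type*} [Fintype V] (neg : V → V → Prop) (a b : V) (hab : a ≠ b)
    (hns : Symmetric neg) (hni : ∀ v, ¬ neg v v) (hnab : ¬ neg a b)
    (hcover : ∀ v : V, (v = b ∨ neg v a) ∨ (v = a ∨ neg v b)) :
    fixc (fun u w => (u = a ∧ w = b) ∨ (u = b ∧ w = a)) neg ≤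
        fixc (fun _ _ => False)
          (fun u w => neg u w ∨ (u = a ∧ w = b) ∨ (u = b ∧ w = a)) + 1 ∧
    ((¬ ∃ u v, IsInducedC4
        (fun x y => ((x = a ∧ y = b) ∨ (x = b ∧ y = a)) ∨ neg x y) a b u v) →
      fixc (fun u w => (u = a ∧ w = b) ∨ (u = b ∧ w = a)) neg ≤
        fixc (fun _ _ => False)
          (fun u w => neg u w ∨ (u = a ∧ w = b) ∨ (u = b ∧ w = a))) := by
  classical
  have hGeq : fixc (fun u w => (u = a ∧ w = b) ∨ (u = b ∧ w = a)) neg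
      = Set.ncard {S : Set V | IsFixedSet (posE a b) neg S} := rfl
  have hG'eq : fixc (fun _ _ => False)
        (fun u w => neg u w ∨ (u = a ∧ w = b) ∨ (u = b ∧ w = a))
      = Set.ncard {S : Set V | IsFixedSet (fun _ _ => False) (negE neg a b) S} := rfl
  have hsub : {S : Set V | IsFixedSet (posE a b) neg S} ⊆
      insert {a, b} (Bset neg a b) := by
    intro S hS
    by_cases h : a ∈ S ∨ b ∈ S
    · rw [Set.mem_insert_iff]
      exact Or.inl (fixedG_eq_pair neg a b hcover hS h)
    · push_neg at h
      exact Set.mem_insert_of_mem _ ⟨hS, h.1, h.2⟩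
  have h1 : fixc (fun u w => (u = a ∧ w = b) ∨ (u = b ∧ w = a)) neg ≤
      (Bset neg a b).ncard + 1 := by
    rw [hGeq]
    exact le_trans (Set.ncard_le_ncard hsub (Set.toFinite _)) (Set.ncard_insert_le _ _)
  have himg : (phi neg a b) '' (Bset neg a b) ⊆
      {S : Set V | IsFixedSet (fun _ _ => False) (negE neg a b) S} := by
    rintro T ⟨S, hS, rfl⟩
    exact phi_mem neg a b hab hns hni hS
  have hcardB : (Bset neg a b).ncard = ((phi neg a b) '' (Bset neg a b)).ncard :=
    (Set.ncard_image_of_injOn (phi_injOn neg a b)).symm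
  constructor
  · rw [hG'eq]
    refine le_trans h1 ?_
    rw [hcardB]
    exact Nat.add_le_add_right (Set.ncard_le_ncard himg (Set.toFinite _)) 1
  · intro hC4
    obtain ⟨T, hT, hTnim⟩ : ∃ T : Set V,
        IsFixedSet (fun _ _ => False) (negE neg a b) T ∧
          T ∉ (phi neg a b) '' (Bset neg a b) := by
      by_cases hcase : ∃ v, neg v a ∧ ¬ neg v b
      · obtain ⟨v, hva, hvb⟩ := hcase
        exact case1_exists neg a b hab hns hni hnab hcover hC4 v hva hvb
      · push_neg at hcase
        obtain ⟨h2a, h2b⟩ := case2_exists neg a b hab hns hni hnab hcover hcase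
        exact ⟨{b}, h2a, h2b⟩
    rw [hG'eq]
    have hins : insert T ((phi neg a b) '' (Bset neg a b)) ⊆
        {S : Set V | IsFixedSet (fun _ _ => False) (negE neg a b) S} := by
      rw [Set.insert_subset_iff]
      exact ⟨hT, himg⟩
    refine le_trans h1 ?_
    rw [hcardB, ← Set.ncard_insert_of_notMem hTnim (Set.toFinite _)]
    exact Set.ncard_le_ncard hins (Set.toFinite _)
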